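/- If z lies in the upper half plane ℝ + i·ℝ_{>0} and z' = 1/(1−z), z'' = (z−1)/z, then Log(z) + Log(z') + Log(z'') = iπ, where Log is the principal logarithm. -/

import Mathlib

open Complex in
lemma arg_pos_of_im_pos {w : ℂ} (hw : 0 < w.im) : 0 < arg w := by
  rcases lt_or_eq_of_le (Complex.arg_nonneg_iff.mpr hw.le) with h | h
  · exact h
  · exact absurd (Complex.arg_eq_zero_iff.mp h.symm).2 hw.ne'

open Complex in
lemma arg_lt_pi_of_im_pos {w : ℂ} (hw : 0 < w.im) : arg w < Real.pi :=
  Complex.arg_lt_pi_iff.mpr (Or.inr hw.ne')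

/-- If `z` lies in the upper half plane and `z' = 1/(1-z)`, `z'' = (z-1)/z`, then
`Log(z) + Log(z') + Log(z'') = iπ`. -/
theorem stmt12 (z : ℂ) (hz : 0 < z.im) :
    Complex.log z + Complex.log (1 / (1 - z)) + Complex.log ((z - 1) / z) =
      (Real.pi : ℂ) * Complex.I := by
  have hz0 : z ≠ 0 := by
    intro h; rw [h] at hz; simp at hz
  have h1z : (1 : ℂ) - z ≠ 0 := by
    intro h
    have : z = 1 := by linear_combination -h
    rw [this] at hz; simp at hz
  set b : ℂ := 1 / (1 - z) with hb
  set c : ℂ := (z - 1) / z with hc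
  have hb0 : b ≠ 0 := one_div_ne_zero h1z
  have hc0 : c ≠ 0 := div_ne_zero (by intro h; apply h1z; linear_combination -h) hz0
  have hbim : 0 < b.im := by
    rw [hb, Complex.div_im]
    simp only [Complex.one_re, Complex.one_im, Complex.sub_im, Complex.sub_re]
    have h1 : 0 < Complex.normSq (1 - z) := Complex.normSq_pos.mpr h1z
    have h3 : 0 * (1 - z.re) / Complex.normSq (1 - z) - 1 * (0 - z.im) / Complex.normSq (1 - z)
        = z.im / Complex.normSq (1 - z) := by ring
    rw [h3]
    positivity
  have hcim : 0 < c.im := by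
    rw [hc, Complex.div_im]
    have h1 : 0 < Complex.normSq z := Complex.normSq_pos.mpr hz0
    have h2 : (z - 1).im = z.im := by simp
    have h3 : (z - 1).re = z.re - 1 := by simp
    rw [h2, h3, div_sub_div_same]
    have h4 : z.im * z.re - (z.re - 1) * z.im = z.im := by ring
    rw [h4]
    positivity
  have habc : z * b * c = -1 := by
    rw [hb, hc]
    field_simp
    ring
  have hang : ((z.arg + b.arg + c.arg : ℝ) : Real.Angle) = (Real.pi : Real.Angle) := by
    have h1 : ((z * b * c).arg : Real.Angle) = (z.arg : Real.Angle) + b.arg + c.arg := by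
      rw [Complex.arg_mul_coe_angle (mul_ne_zero hz0 hb0) hc0,
        Complex.arg_mul_coe_angle hz0 hb0]
    rw [habc, Complex.arg_neg_one] at h1
    rw [Real.Angle.coe_add, Real.Angle.coe_add]
    exact h1.symm
  have hpi := Real.pi_pos
  have harg : z.arg + b.arg + c.arg = Real.pi := by
    obtain ⟨k, hk⟩ := Real.Angle.angle_eq_iff_two_pi_dvd_sub.mp hang
    have hlo : 0 < z.arg + b.arg + c.arg := by
      have := arg_pos_of_im_pos hz
      have := arg_pos_of_im_pos hbim
      have := arg_pos_of_im_pos hcim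
      linarith
    have hhi : z.arg + b.arg + c.arg < 3 * Real.pi := by
      have := arg_lt_pi_of_im_pos hz
      have := arg_lt_pi_of_im_pos hbim
      have := arg_lt_pi_of_im_pos hcim
      linarith
    have hk0 : k = 0 := by
      by_contra hk0
      rcases lt_or_gt_of_ne hk0 with h | h
      · have : (k : ℝ) ≤ -1 := by exact_mod_cast (by omega : k ≤ -1)
        nlinarith
      · have : (1 : ℝ) ≤ k := by exact_mod_cast h
        nlinarith
    rw [hk0] at hk
    push_cast at hk
    linarith
  have habs : ‖z‖ * ‖b‖ * ‖c‖ = 1 := by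
    rw [← norm_mul, ← norm_mul, habc]
    simp
  apply Complex.ext
  · simp only [Complex.add_re, Complex.log_re, Complex.mul_re, Complex.I_re,
      Complex.I_im, Complex.ofReal_re, Complex.ofReal_im]
    rw [← Real.log_mul (norm_ne_zero_iff.mpr hz0) (norm_ne_zero_iff.mpr hb0),
      ← Real.log_mul (mul_ne_zero (norm_ne_zero_iff.mpr hz0) (norm_ne_zero_iff.mpr hb0)) (norm_ne_zero_iff.mpr hc0), habs, Real.log_one]
    ring
  · simp only [Complex.add_im, Complex.log_im, Complex.mul_im, Complex.I_re,
      Complex.I_im, Complex.ofReal_re, Complex.ofReal_im]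
    rw [harg]
    ring
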